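/- For all integers l ≥ 2 and m ≥ 2, the set of singular points of the projective plane curve C_{l,m} = {[x:y:z] ∈ ℂℙ² : (y^{l-1}·z − x^l)^m − x^{l·m−1}·y = 0} is exactly {[0:1:0], [0:0:1]}; that is, a point P of ℂℙ² satisfies F_{l,m}(P) = 0 together with (∂F_{l,m}/∂x)(P) = (∂F_{l,m}/∂y)(P) = (∂F_{l,m}/∂z)(P) = 0 (evaluated on any homogeneous representative of P) if and only if P = [0:1:0] or P = [0:0:1]. -/
import Mathlib

open MvPolynomial Projectivization

noncomputable def Fpoly (l m : ℕ) : MvPolynomial (Fin 3) ℂ :=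
  (X 1 ^ (l - 1) * X 2 - X 0 ^ l) ^ m - X 0 ^ (l * m - 1) * X 1

lemma evalF (l m : ℕ) (v : Fin 3 → ℂ) :
    eval v (Fpoly l m) = (v 1 ^ (l-1) * v 2 - v 0 ^ l)^m - v 0 ^ (l*m-1) * v 1 := by
  simp [Fpoly]

lemma evalP0 (l m : ℕ) (v : Fin 3 → ℂ) :
    eval v (pderiv 0 (Fpoly l m)) =
      -(m * (v 1 ^ (l-1) * v 2 - v 0 ^ l)^(m-1) * (l * v 0 ^ (l-1)))
        - (l*m-1 : ℕ) * v 0 ^ (l*m-1-1) * v 1 := by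
  simp [Fpoly, pderiv_pow, pderiv_X, Pi.single_apply]; ring

lemma evalP1 (l m : ℕ) (v : Fin 3 → ℂ) :
    eval v (pderiv 1 (Fpoly l m)) =
      m * (v 1 ^ (l-1) * v 2 - v 0 ^ l)^(m-1) * ((l-1 : ℕ) * v 1 ^ (l-1-1) * v 2)
        - v 0 ^ (l*m-1) := by
  simp [Fpoly, pderiv_pow, pderiv_X, Pi.single_apply]; ring

lemma evalP2 (l m : ℕ) (v : Fin 3 → ℂ) :
    eval v (pderiv 2 (Fpoly l m)) =
      m * (v 1 ^ (l-1) * v 2 - v 0 ^ l)^(m-1) * v 1 ^ (l-1) := by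
  simp [Fpoly, pderiv_pow, pderiv_X, Pi.single_apply]; ring

lemma key (l m : ℕ) (hl : 2 ≤ l) (hm : 2 ≤ m) (v : Fin 3 → ℂ) :
    (eval v (Fpoly l m) = 0 ∧
        eval v (pderiv 0 (Fpoly l m)) = 0 ∧
        eval v (pderiv 1 (Fpoly l m)) = 0 ∧
        eval v (pderiv 2 (Fpoly l m)) = 0) ↔
      (v 0 = 0 ∧ (v 1 = 0 ∨ v 2 = 0)) := by
  have h4 : 4 ≤ l * m := Nat.mul_le_mul hl hm
  have hl1 : l - 1 ≠ 0 := by omega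
  have hm1 : m - 1 ≠ 0 := by omega
  have hlm1 : l * m - 1 ≠ 0 := by omega
  have hlm2 : l * m - 1 - 1 ≠ 0 := by omega
  have hln : l ≠ 0 := by omega
  have hmn : m ≠ 0 := by omega
  rw [evalF, evalP0, evalP1, evalP2]
  set a := v 0; set b := v 1; set c := v 2
  set G := b ^ (l-1) * c - a ^ l with hG
  constructor
  · rintro ⟨h0, h1, h2, h3⟩
    have hmC : (m : ℂ) ≠ 0 := Nat.cast_ne_zero.mpr hmn
    rcases mul_eq_zero.mp h3 with h | h
    · rcases mul_eq_zero.mp h with h | h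
      · exact absurd h hmC
      · -- G ^ (m-1) = 0
        have hG0 : G = 0 := pow_eq_zero_iff hm1 |>.mp h
        have ha : a = 0 := by
          rw [hG0, zero_pow hm1, mul_zero, zero_mul, zero_sub, neg_eq_zero] at h2
          exact pow_eq_zero_iff hlm1 |>.mp h2
        refine ⟨ha, ?_⟩
        have hG' : b ^ (l-1) * c - a ^ l = 0 := by rw [← hG]; exact hG0
        have : b ^ (l-1) * c = 0 := by
          rw [ha, zero_pow hln, sub_zero] at hG'; exact hG' 
        rcases mul_eq_zero.mp this with h | h
        · exact Or.inl (pow_eq_zero_iff hl1 |>.mp h)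
        · exact Or.inr h
    · -- b = 0
      have hb : b = 0 := pow_eq_zero_iff hl1 |>.mp h
      have hG0 : G ^ m = 0 := by rw [hb] at h0; simpa using h0
      have hG0' : G = 0 := pow_eq_zero_iff hmn |>.mp hG0
      have ha : a = 0 := by
        have hG' : b ^ (l-1) * c - a ^ l = 0 := by rw [← hG]; exact hG0'
        rw [hb, zero_pow hl1, zero_mul, zero_sub, neg_eq_zero] at hG'
        exact pow_eq_zero_iff hln |>.mp hG' 
      exact ⟨ha, Or.inl hb⟩
  · rintro ⟨ha, hbc⟩
    have hG0 : G = 0 := by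
      rw [hG, ha, zero_pow hln, sub_zero]
      rcases hbc with h | h
      · rw [h, zero_pow hl1, zero_mul]
      · rw [h, mul_zero]
    refine ⟨?_, ?_, ?_, ?_⟩
    · rw [hG0, ha, zero_pow hmn, zero_pow hlm1, zero_mul, sub_zero]
    · rw [hG0, ha, zero_pow hm1, zero_pow hlm2]; ring
    · rw [hG0, ha, zero_pow hm1, zero_pow hlm1]; ring
    · rw [hG0, zero_pow hm1]; ring

theorem stmt_1 (l m : ℕ) (hl : 2 ≤ l) (hm : 2 ≤ m) :
    {P : Projectivization ℂ (Fin 3 → ℂ) |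
        eval P.rep (Fpoly l m) = 0 ∧
        eval P.rep (pderiv 0 (Fpoly l m)) = 0 ∧
        eval P.rep (pderiv 1 (Fpoly l m)) = 0 ∧
        eval P.rep (pderiv 2 (Fpoly l m)) = 0} =
      {Projectivization.mk ℂ ![0, 1, 0] (fun h => by simpa using congrFun h 1),
       Projectivization.mk ℂ ![0, 0, 1] (fun h => by simpa using congrFun h 2)} := by
  ext P
  have hv0 : P.rep ≠ 0 := P.rep_nonzero
  simp only [Set.mem_setOf_eq, Set.mem_insert_iff, Set.mem_singleton_iff]
  rw [key l m hl hm]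
  constructor
  · rintro ⟨ha, hbc⟩
    rcases hbc with hb | hc
    · right
      have hcne : P.rep 2 ≠ 0 := by
        intro h
        apply hv0
        funext i; fin_cases i <;> simpa [ha, hb]
      rw [← P.mk_rep, mk_eq_mk_iff]
      exact ⟨Units.mk0 (P.rep 2) hcne, by funext i; fin_cases i <;> simp [ha, hb]⟩
    · by_cases hb : P.rep 1 = 0
      · right
        have hcne : P.rep 2 ≠ 0 := by
          intro h
          apply hv0
          funext i; fin_cases i <;> simpa [ha, hb]
        rw [← P.mk_rep, mk_eq_mk_iff]
        exact ⟨Units.mk0 (P.rep 2) hcne, by funext i; fin_cases i <;> simp [ha, hb]⟩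
      · left
        rw [← P.mk_rep, mk_eq_mk_iff]
        exact ⟨Units.mk0 (P.rep 1) hb, by funext i; fin_cases i <;> simp [ha, hc]⟩
  · rintro (h | h)
    · have : Projectivization.mk ℂ P.rep hv0 = Projectivization.mk ℂ ![0, 1, 0]
          (fun h => by simpa using congrFun h 1) := by rw [P.mk_rep, h]
      obtain ⟨u, hu⟩ := (mk_eq_mk_iff _ _ _ _ _).mp this
      have h0 : P.rep 0 = 0 := by rw [← hu]; simp
      have h2 : P.rep 2 = 0 := by rw [← hu]; simp
      exact ⟨h0, Or.inr h2⟩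
    · have : Projectivization.mk ℂ P.rep hv0 = Projectivization.mk ℂ ![0, 0, 1]
          (fun h => by simpa using congrFun h 2) := by rw [P.mk_rep, h]
      obtain ⟨u, hu⟩ := (mk_eq_mk_iff _ _ _ _ _).mp this
      have h0 : P.rep 0 = 0 := by rw [← hu]; simp
      have h1 : P.rep 1 = 0 := by rw [← hu]; simp
      exact ⟨h0, Or.inl h1⟩
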